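/- Let μ and ν be probability measures on ℝ with all moments finite, and let μ∗ν denote the classical convolution of measures (the pushforward of the product measure μ×ν under addition). Then for every n ≥ 0 the function x ↦ x^n is integrable with respect to μ∗ν and (\hat{μ}⋆\hat{ν})(X^n) = ∫ x^n d(μ∗ν)(x); i.e., the moments of the filtered convolution restricted to powers of X agree with the moments of the classical convolution μ∗ν. -/

import Mathlib

open scoped TensorProduct

/-- The two-letter alphabet `{z, w}`. -/
inductive Letter | z | w
deriving DecidableEq

/-- Words: elements of the free monoid `S = FS({z,w})`. -/
abbrev Word := List Letter

/-- The three generators `X, X', P` of the algebra `B`. -/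
inductive Gen | X | X' | P
deriving DecidableEq, BEq

/-- The free unital associative `ℂ`-algebra on the generators `X, X', P`. -/
abbrev B := FreeAlgebra ℂ Gen

/-- `X(z) = X`, `X(w) = X'`. -/
noncomputable def Xletter (l : Letter) : B :=
  FreeAlgebra.ι ℂ (match l with | .z => Gen.X | .w => Gen.X')

/-- `X(t) = X(t₁) ⋯ X(t_r)` for a word `t ∈ S`. -/
noncomputable def Xword (t : Word) : B := (t.map Xletter).prod

/-- The projection generator `P`. -/
noncomputable def Pgen : B := FreeAlgebra.ι ℂ Gen.P

/-- Value of the functional `\hat μ` (built from the moment sequence `m`, `m 0 = 1`)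
on a basis word of `B`: split the word into maximal `P`-free blocks and take the
product of `m (length of block)`. -/
def wordVal (m : ℕ → ℂ) (l : List Gen) : ℂ :=
  ((l.splitOn Gen.P).map (fun t => if t = [] then 1 else m t.length)).prod

/-- The linear functional `\hat μ : B → ℂ` associated with a moment sequence `m`. -/
noncomputable def hatL (m : ℕ → ℂ) : B →ₗ[ℂ] ℂ :=
  (Finsupp.linearCombination ℂ (fun x : FreeMonoid Gen => wordVal m (FreeMonoid.toList x))).comp
    ((MonoidAlgebra.coeffLinearEquiv ℂ).toLinearMap.comp
    (FreeAlgebra.equivMonoidAlgebraFreeMonoid : B ≃ₐ[ℂ] MonoidAlgebra ℂ (FreeMonoid Gen)).toLinearMap)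

/-- The coproduct `Δ : B → B ⊗ B`, `Δ X = X⊗1 + 1⊗X`, `Δ X' = X'⊗P + P⊗X'`, `Δ P = P⊗P`. -/
noncomputable def Cop : B →ₐ[ℂ] B ⊗[ℂ] B :=
  FreeAlgebra.lift ℂ (fun g : Gen => match g with
    | .X => FreeAlgebra.ι ℂ Gen.X ⊗ₜ[ℂ] 1 + 1 ⊗ₜ[ℂ] FreeAlgebra.ι ℂ Gen.X
    | .X' => FreeAlgebra.ι ℂ Gen.X' ⊗ₜ[ℂ] Pgen + Pgen ⊗ₜ[ℂ] FreeAlgebra.ι ℂ Gen.X'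
    | .P => Pgen ⊗ₜ[ℂ] Pgen)

/-- The functional `φ ⊗ ψ` on `B ⊗ B`. -/
noncomputable def tensorFunc (φ ψ : B →ₗ[ℂ] ℂ) : B ⊗[ℂ] B →ₗ[ℂ] ℂ :=
  (LinearMap.mul' ℂ ℂ).comp (TensorProduct.map φ ψ)

/-- The filtered convolution `φ ⋆ ψ = (φ ⊗ ψ) ∘ Δ`. -/
noncomputable def filtConv (φ ψ : B →ₗ[ℂ] ℂ) : B →ₗ[ℂ] ℂ :=
  (tensorFunc φ ψ).comp Cop.toLinearMap

/-- The `n`-th moment of a measure on `ℝ`, as a complex number. -/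
noncomputable def mom (μ : MeasureTheory.Measure ℝ) (n : ℕ) : ℂ :=
  ((∫ x, x ^ n ∂μ : ℝ) : ℂ)


lemma equiv_iota (g : Gen) :
    FreeAlgebra.equivMonoidAlgebraFreeMonoid (FreeAlgebra.ι ℂ g)
      = MonoidAlgebra.single (FreeMonoid.of g) 1 := by
  simp [FreeAlgebra.equivMonoidAlgebraFreeMonoid, MonoidAlgebra.of_apply]

lemma toList_of_pow (g : Gen) (k : ℕ) :
    FreeMonoid.toList (FreeMonoid.of g ^ k) = List.replicate k g := by
  induction k with
  | zero => rfl
  | succ k ih => rw [pow_succ']; simp [ih, List.replicate_succ]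

lemma hatL_X_pow (m : ℕ → ℂ) (k : ℕ) :
    hatL m (FreeAlgebra.ι ℂ Gen.X ^ k) = if k = 0 then 1 else m k := by
  have h1 : FreeAlgebra.equivMonoidAlgebraFreeMonoid (FreeAlgebra.ι ℂ Gen.X ^ k)
      = MonoidAlgebra.single (FreeMonoid.of Gen.X ^ k) 1 := by
    rw [map_pow, equiv_iota, MonoidAlgebra.single_pow, one_pow]
  have h2 : (List.replicate k Gen.X).splitOn Gen.P = [List.replicate k Gen.X] := by
    apply List.splitOnP_eq_single
    intro x hx
    have : x = Gen.X := (List.eq_of_mem_replicate hx)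
    subst this; decide
  have key : hatL m (FreeAlgebra.ι ℂ Gen.X ^ k)
      = (Finsupp.linearCombination ℂ (fun x : FreeMonoid Gen => wordVal m (FreeMonoid.toList x)))
        (MonoidAlgebra.coeffLinearEquiv ℂ (FreeAlgebra.equivMonoidAlgebraFreeMonoid (FreeAlgebra.ι ℂ Gen.X ^ k))) := rfl
  rw [key, h1, MonoidAlgebra.coeffLinearEquiv_apply, MonoidAlgebra.coeff_single, Finsupp.linearCombination_single, one_smul, toList_of_pow, wordVal, h2]
  rcases k with _ | k <;> simp

lemma tensorFunc_tmul (φ ψ : B →ₗ[ℂ] ℂ) (x y : B) :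
    tensorFunc φ ψ (x ⊗ₜ[ℂ] y) = φ x * ψ y := by
  simp [tensorFunc]

lemma Cop_X : Cop (FreeAlgebra.ι ℂ Gen.X)
    = FreeAlgebra.ι ℂ Gen.X ⊗ₜ[ℂ] 1 + 1 ⊗ₜ[ℂ] FreeAlgebra.ι ℂ Gen.X := by
  simp [Cop]

lemma filtConv_X_pow (φ ψ : B →ₗ[ℂ] ℂ) (n : ℕ) :
    filtConv φ ψ (FreeAlgebra.ι ℂ Gen.X ^ n)
      = ∑ k ∈ Finset.range (n + 1),
          (n.choose k) • (φ (FreeAlgebra.ι ℂ Gen.X ^ k) * ψ (FreeAlgebra.ι ℂ Gen.X ^ (n - k))) := by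
  set a : B ⊗[ℂ] B := FreeAlgebra.ι ℂ Gen.X ⊗ₜ[ℂ] 1
  set b : B ⊗[ℂ] B := 1 ⊗ₜ[ℂ] FreeAlgebra.ι ℂ Gen.X
  have hcomm : Commute a b := by
    simp only [Commute, SemiconjBy, a, b, Algebra.TensorProduct.tmul_mul_tmul,
      one_mul, mul_one]
  have hCop : Cop (FreeAlgebra.ι ℂ Gen.X ^ n) = (a + b) ^ n := by
    rw [map_pow, Cop_X]
  have hab : ∀ k j : ℕ, a ^ k * b ^ j
      = (FreeAlgebra.ι ℂ Gen.X ^ k) ⊗ₜ[ℂ] (FreeAlgebra.ι ℂ Gen.X ^ j) := by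
    intro k j
    simp only [a, b, Algebra.TensorProduct.tmul_pow, one_pow,
      Algebra.TensorProduct.tmul_mul_tmul, one_mul, mul_one]
  rw [filtConv, LinearMap.comp_apply, AlgHom.toLinearMap_apply, hCop, hcomm.add_pow,
    map_sum]
  refine Finset.sum_congr rfl fun k _ => ?_
  rw [hab, ← nsmul_eq_mul', map_nsmul, tensorFunc_tmul]

lemma mom_zero (μ : MeasureTheory.Measure ℝ) [MeasureTheory.IsProbabilityMeasure μ] :
    mom μ 0 = 1 := by
  simp [mom]

lemma hatL_mom_X_pow (μ : MeasureTheory.Measure ℝ) [MeasureTheory.IsProbabilityMeasure μ]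
    (k : ℕ) : hatL (mom μ) (FreeAlgebra.ι ℂ Gen.X ^ k) = mom μ k := by
  rw [hatL_X_pow]
  rcases k with _ | k
  · rw [if_pos rfl, mom_zero]
  · rw [if_neg (Nat.succ_ne_zero k)]

open MeasureTheory

/-- the moments of the filtered convolution restricted to powers of `X`
agree with the moments of the classical convolution `μ ∗ ν`. -/
theorem filtConv_classical (μ ν : MeasureTheory.Measure ℝ)
    [MeasureTheory.IsProbabilityMeasure μ] [MeasureTheory.IsProbabilityMeasure ν]
    (hμ : ∀ n : ℕ, MeasureTheory.Integrable (fun x => x ^ n) μ)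
    (hν : ∀ n : ℕ, MeasureTheory.Integrable (fun x => x ^ n) ν)
    (n : ℕ) :
    MeasureTheory.Integrable (fun x => x ^ n)
        (MeasureTheory.Measure.map (fun p : ℝ × ℝ => p.1 + p.2) (μ.prod ν)) ∧
      filtConv (hatL (mom μ)) (hatL (mom ν)) (FreeAlgebra.ι ℂ Gen.X ^ n) =
        ((∫ x, x ^ n ∂(MeasureTheory.Measure.map (fun p : ℝ × ℝ => p.1 + p.2) (μ.prod ν)) : ℝ) : ℂ) := by
  have hadd : Measurable (fun p : ℝ × ℝ => p.1 + p.2) := measurable_fst.add measurable_snd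
  have hpow : Measurable (fun x : ℝ => x ^ n) := measurable_id.pow_const n
  have hterm : ∀ k : ℕ, Integrable (fun p : ℝ × ℝ => p.1 ^ k * p.2 ^ (n - k)) (μ.prod ν) :=
    fun k => (hμ k).mul_prod (hν (n - k))
  have hexp : (fun p : ℝ × ℝ => (p.1 + p.2) ^ n)
      = fun p => ∑ k ∈ Finset.range (n + 1), p.1 ^ k * p.2 ^ (n - k) * (n.choose k : ℝ) := by
    funext p; rw [add_pow]
  have hint : Integrable (fun p : ℝ × ℝ => (p.1 + p.2) ^ n) (μ.prod ν) := by
    rw [hexp]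
    exact integrable_finset_sum _ (fun k _ => (hterm k).mul_const _)
  have hmap : Integrable (fun x => x ^ n)
      (MeasureTheory.Measure.map (fun p : ℝ × ℝ => p.1 + p.2) (μ.prod ν)) := by
    rw [integrable_map_measure hpow.aestronglyMeasurable hadd.aemeasurable]
    exact hint
  refine ⟨hmap, ?_⟩
  have hI : (∫ x, x ^ n ∂(MeasureTheory.Measure.map (fun p : ℝ × ℝ => p.1 + p.2) (μ.prod ν)))
      = ∑ k ∈ Finset.range (n + 1),
          (∫ x, x ^ k ∂μ) * (∫ y, y ^ (n - k) ∂ν) * (n.choose k : ℝ) := by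
    rw [integral_map hadd.aemeasurable hpow.aestronglyMeasurable]
    calc ∫ p, (p.1 + p.2) ^ n ∂(μ.prod ν)
        = ∫ p, ∑ k ∈ Finset.range (n + 1), p.1 ^ k * p.2 ^ (n - k) * (n.choose k : ℝ)
            ∂(μ.prod ν) := by rw [← hexp]
      _ = ∑ k ∈ Finset.range (n + 1),
            ∫ p, p.1 ^ k * p.2 ^ (n - k) * (n.choose k : ℝ) ∂(μ.prod ν) :=
          integral_finset_sum _ (fun k _ => (hterm k).mul_const _)
      _ = _ := by
          refine Finset.sum_congr rfl fun k _ => ?_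
          rw [integral_mul_const, integral_prod_mul (fun x => x ^ k) (fun y => y ^ (n - k))]
  rw [filtConv_X_pow, hI]
  push_cast [mom]
  refine Finset.sum_congr rfl fun k _ => ?_
  rw [hatL_mom_X_pow, hatL_mom_X_pow]
  push_cast [mom]
  ring
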